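/- Let d be an odd prime and ρ a bipartite density supported in M such that for every k ≠ 0 and all n1, n2 ∈ Z_d, ρ_{n1 n2, (n1+k)(n2+k)} = c_{n2−n1}, where c_r (r ∈ Z_d) are real constants. Then for all a = (a1,a2), m = (m1,m2) ∈ Z_d × Z_d, C(a,m) = (1/d) δ(a1, −a2) Σ_{r∈Z_d} c_r (d·δ(m1+m2, r a1) − 1), where δ is the Kronecker delta on Z_d. -/

import Mathlib

open Matrix
open scoped ComplexOrder

/-- `η = exp(2πi/d)`. -/
noncomputable def eta (d : ℕ) : ℂ := Complex.exp (2 * Real.pi * Complex.I / d)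

/-- The coefficient `C(a,m)` determined by
`d² C(a,m) = Σ_{k=1}^{d−1} Σ_{n1,n2} η^{−(k(k−1)/2)(a1+a2) − k(m1+m2) − k(a1 n1 + a2 n2)}
ρ_{n1 n2, (n1+k)(n2+k)}`. -/
noncomputable def Ccoef (d : ℕ) [NeZero d]
    (ρ : Matrix (ZMod d × ZMod d) (ZMod d × ZMod d) ℂ)
    (a m : ZMod d × ZMod d) : ℂ :=
  ((d : ℂ) ^ 2)⁻¹ *
    ∑ k ∈ Finset.Icc 1 (d - 1), ∑ n1 : ZMod d, ∑ n2 : ZMod d,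
      eta d ^ (-(((k : ℤ) * ((k : ℤ) - 1) / 2) * ((a.1.val : ℤ) + (a.2.val : ℤ))
          + (k : ℤ) * ((m.1.val : ℤ) + (m.2.val : ℤ))
          + (k : ℤ) * ((a.1.val : ℤ) * (n1.val : ℤ) + (a.2.val : ℤ) * (n2.val : ℤ))))
        * ρ (n1, n2) (n1 + (k : ZMod d), n2 + (k : ZMod d))

section Aux
variable {d : ℕ} [NeZero d]

noncomputable def eE (d : ℕ) [NeZero d] (x : ZMod d) : ℂ := eta d ^ x.val

lemma eta_prim (d : ℕ) [NeZero d] : IsPrimitiveRoot (eta d) d :=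
  Complex.isPrimitiveRoot_exp d (NeZero.ne d)

lemma eta_pow_d (d : ℕ) [NeZero d] : eta d ^ d = 1 := (eta_prim d).pow_eq_one

lemma eta_pow_mod (a : ℕ) : eta d ^ a = eta d ^ (a % d) := by
  conv_lhs => rw [← Nat.div_add_mod a d]
  rw [pow_add, pow_mul, eta_pow_d, one_pow, one_mul]

lemma eE_zero : eE d 0 = 1 := by simp [eE]

lemma eE_add (x y : ZMod d) : eE d (x + y) = eE d x * eE d y := by
  rw [eE, eE, eE, ZMod.val_add, ← eta_pow_mod, pow_add]

lemma eE_intCast (z : ℤ) : eta d ^ z = eE d (z : ZMod d) := by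
  have hne : eta d ≠ 0 := Complex.exp_ne_zero _
  set w := ((z : ZMod d)).val with hw
  have hcast : ((w : ℤ) : ZMod d) = (z : ZMod d) := by
    simp [hw, ZMod.natCast_val, ZMod.cast_id]
  have hdvd : (d : ℤ) ∣ z - (w : ℤ) := by
    rwa [← ZMod.intCast_zmod_eq_zero_iff_dvd, Int.cast_sub, sub_eq_zero, eq_comm]
  conv_lhs => rw [show z = (w : ℤ) + (z - (w : ℤ)) by ring, zpow_add₀ hne,
    ((eta_prim d).zpow_eq_one_iff_dvd _).mpr hdvd, mul_one, zpow_natCast]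
  rfl

lemma eE_nat_mul (t : ZMod d) (i : ℕ) : eE d ((i : ZMod d) * t) = eE d t ^ i := by
  induction i with
  | zero => simp [eE_zero]
  | succ n ih =>
    have h : ((n + 1 : ℕ) : ZMod d) * t = (n : ZMod d) * t + t := by push_cast; ring
    rw [h, eE_add, ih, pow_succ]

lemma sum_zmod (f : ZMod d → ℂ) :
    ∑ x : ZMod d, f x = ∑ i ∈ Finset.range d, f (i : ZMod d) := by
  refine Finset.sum_nbij' (fun (x : ZMod d) => x.val) (fun (i : ℕ) => (i : ZMod d))
    ?_ ?_ ?_ ?_ ?_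
  · intro a _; exact Finset.mem_range.mpr (ZMod.val_lt a)
  · intro a _; exact Finset.mem_univ _
  · intro a _; simp [ZMod.natCast_val, ZMod.cast_id]
  · intro a ha; exact ZMod.val_cast_of_lt (Finset.mem_range.mp ha)
  · intro a _; simp [ZMod.natCast_val, ZMod.cast_id]

lemma sum_eE_mul (t : ZMod d) :
    ∑ x : ZMod d, eE d (t * x) = if t = 0 then (d : ℂ) else 0 := by
  split_ifs with h
  · subst h
    simp only [zero_mul, eE_zero, Finset.sum_const, Finset.card_univ, ZMod.card,
      nsmul_eq_mul, mul_one]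
  · have h1 : eE d t ≠ 1 := by
      rw [eE]
      refine (eta_prim d).pow_ne_one_of_pos_of_lt ?_ (ZMod.val_lt t)
      exact fun hv => h ((ZMod.val_eq_zero t).mp hv)
    have h2 : ∀ x : ZMod d, eE d (t * x) = (fun x : ZMod d => eE d (x * t)) x := by
      intro x; simp [mul_comm]
    rw [Finset.sum_congr rfl fun x _ => h2 x, sum_zmod (fun x : ZMod d => eE d (x * t))]
    have h3 : ∀ i : ℕ, eE d ((i : ZMod d) * t) = eE d t ^ i := fun i => eE_nat_mul t i
    rw [Finset.sum_congr rfl fun i _ => h3 i, geom_sum_eq h1]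
    have hd1 : eE d t ^ d = 1 := by
      rw [← eE_nat_mul, ZMod.natCast_self, zero_mul, eE_zero]
    rw [hd1, sub_self, zero_div]

lemma sum_eE_affine (p t : ZMod d) :
    ∑ n : ZMod d, eE d (p + t * n) = eE d p * (if t = 0 then (d : ℂ) else 0) := by
  simp only [eE_add]
  rw [← Finset.mul_sum, sum_eE_mul]

lemma Icc_sum (f : ℕ → ℂ) :
    ∑ k ∈ Finset.Icc 1 (d - 1), f k = (∑ k ∈ Finset.range d, f k) - f 0 := by
  have hd0 := NeZero.ne d
  have h : Finset.range d = insert 0 (Finset.Icc 1 (d - 1)) := by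
    ext x
    simp only [Finset.mem_range, Finset.mem_insert, Finset.mem_Icc]
    omega
  rw [h, Finset.sum_insert (by simp)]
  ring

lemma sum_k_eE (u : ZMod d) :
    ∑ k ∈ Finset.Icc 1 (d - 1), eE d ((k : ZMod d) * u)
      = (if u = 0 then (d : ℂ) else 0) - 1 := by
  rw [Icc_sum (fun k : ℕ => eE d ((k : ZMod d) * u))]
  rw [← sum_zmod (fun x : ZMod d => eE d (x * u))]
  have : ∀ x : ZMod d, eE d (x * u) = eE d (u * x) := fun x => by rw [mul_comm]
  rw [Finset.sum_congr rfl fun x _ => this x, sum_eE_mul, Nat.cast_zero, zero_mul, eE_zero]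

end Aux

lemma inner_key (d : ℕ) [NeZero d] (hd : d.Prime)
    (ρ : Matrix (ZMod d × ZMod d) (ZMod d × ZMod d) ℂ)
    (c : ZMod d → ℝ)
    (hval : ∀ k : ZMod d, k ≠ 0 → ∀ n1 n2 : ZMod d,
        ρ (n1, n2) (n1 + k, n2 + k) = (c (n2 - n1) : ℂ))
    (a1 a2 m1 m2 : ZMod d) (k : ℕ) (hk : (k : ZMod d) ≠ 0) :
    ∑ n1 : ZMod d, ∑ n2 : ZMod d,
      eta d ^ (-(((k : ℤ) * ((k : ℤ) - 1) / 2) * ((a1.val : ℤ) + (a2.val : ℤ))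
          + (k : ℤ) * ((m1.val : ℤ) + (m2.val : ℤ))
          + (k : ℤ) * ((a1.val : ℤ) * (n1.val : ℤ) + (a2.val : ℤ) * (n2.val : ℤ))))
        * ρ (n1, n2) (n1 + (k : ZMod d), n2 + (k : ZMod d))
      = if a1 + a2 = 0 then
          (d : ℂ) * ∑ r : ZMod d, (c r : ℂ) * eE d ((k : ZMod d) * (a1 * r - (m1 + m2)))
        else 0 := by
  haveI := Fact.mk hd
  calc
    ∑ n1 : ZMod d, ∑ n2 : ZMod d,
      eta d ^ (-(((k : ℤ) * ((k : ℤ) - 1) / 2) * ((a1.val : ℤ) + (a2.val : ℤ))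
          + (k : ℤ) * ((m1.val : ℤ) + (m2.val : ℤ))
          + (k : ℤ) * ((a1.val : ℤ) * (n1.val : ℤ) + (a2.val : ℤ) * (n2.val : ℤ))))
        * ρ (n1, n2) (n1 + (k : ZMod d), n2 + (k : ZMod d))
      = ∑ n1 : ZMod d, ∑ r : ZMod d,
          eE d ((-(((((k : ℤ) * ((k : ℤ) - 1) / 2 : ℤ)) : ZMod d) * (a1 + a2)
              + (k : ZMod d) * (m1 + m2) + (k : ZMod d) * a2 * r))
            + (-((k : ZMod d) * (a1 + a2))) * n1) * (c r : ℂ) := by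
        refine Finset.sum_congr rfl fun n1 _ => ?_
        refine Eq.symm (Fintype.sum_equiv (Equiv.addLeft n1) _ _ fun r => ?_)
        simp only [Equiv.coe_addLeft]
        rw [hval (k : ZMod d) hk n1 (n1 + r), add_sub_cancel_left]
        congr 1
        rw [eE_intCast]
        congr 1
        push_cast [ZMod.natCast_val, ZMod.cast_id]
        ring
    _ = ∑ r : ZMod d, ∑ n1 : ZMod d,
          eE d ((-(((((k : ℤ) * ((k : ℤ) - 1) / 2 : ℤ)) : ZMod d) * (a1 + a2)
              + (k : ZMod d) * (m1 + m2) + (k : ZMod d) * a2 * r))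
            + (-((k : ZMod d) * (a1 + a2))) * n1) * (c r : ℂ) := Finset.sum_comm
    _ = (∑ r : ZMod d, (c r : ℂ) *
          eE d (-(((((k : ℤ) * ((k : ℤ) - 1) / 2 : ℤ)) : ZMod d) * (a1 + a2)
              + (k : ZMod d) * (m1 + m2) + (k : ZMod d) * a2 * r)))
        * (if -((k : ZMod d) * (a1 + a2)) = 0 then (d : ℂ) else 0) := by
        rw [Finset.sum_mul]
        refine Finset.sum_congr rfl fun r _ => ?_
        rw [← Finset.sum_mul, sum_eE_affine]
        ring
    _ = if a1 + a2 = 0 then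
          (d : ℂ) * ∑ r : ZMod d, (c r : ℂ) * eE d ((k : ZMod d) * (a1 * r - (m1 + m2)))
        else 0 := by
        have hiff : (-((k : ZMod d) * (a1 + a2)) = 0) ↔ a1 + a2 = 0 := by
          rw [neg_eq_zero, mul_eq_zero]
          simp [hk]
        by_cases h : a1 + a2 = 0
        · rw [if_pos (hiff.mpr h), if_pos h]
          have ha2 : a2 = -a1 := by
            rw [add_eq_zero_iff_eq_neg] at h
            rw [h]; ring
          subst ha2
          have hsum : ∀ r : ZMod d,
              (c r : ℂ) * eE d (-(((((k : ℤ) * ((k : ℤ) - 1) / 2 : ℤ)) : ZMod d) * (a1 + -a1)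
                + (k : ZMod d) * (m1 + m2) + (k : ZMod d) * (-a1) * r))
              = (c r : ℂ) * eE d ((k : ZMod d) * (a1 * r - (m1 + m2))) := by
            intro r
            congr 2
            ring
          rw [Finset.sum_congr rfl fun r _ => hsum r]
          ring
        · rw [if_neg (fun he => h (hiff.mp he)), if_neg h, mul_zero]

/-- For `d` an odd prime and `ρ` a bipartite density supported
in `M` whose off-diagonal data `ρ_{n1 n2,(n1+k)(n2+k)} = c_{n2−n1}` (`k ≠ 0`)
depend only on `r = n2 − n1` through real constants `c_r`, one has
`C(a,m) = (1/d) δ(a1,−a2) Σ_r c_r (d δ(m1+m2, r a1) − 1)`. -/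
theorem Ccoef_of_translation_invariant (d : ℕ) [NeZero d] (hd : d.Prime) (hodd : Odd d)
    (ρ : Matrix (ZMod d × ZMod d) (ZMod d × ZMod d) ℂ)
    (hρ : ρ.PosSemidef ∧ ρ.trace = 1)
    (hsupp : ∀ j1 j2 k1 k2 : ZMod d, j2 - j1 ≠ k2 - k1 → ρ (j1, j2) (k1, k2) = 0)
    (c : ZMod d → ℝ)
    (hval : ∀ k : ZMod d, k ≠ 0 → ∀ n1 n2 : ZMod d,
        ρ (n1, n2) (n1 + k, n2 + k) = (c (n2 - n1) : ℂ)) :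
    ∀ a1 a2 m1 m2 : ZMod d,
      Ccoef d ρ (a1, a2) (m1, m2)
        = (d : ℂ)⁻¹ * (if a1 = -a2 then 1 else 0)
            * ∑ r : ZMod d,
                (c r : ℂ) * ((d : ℂ) * (if m1 + m2 = r * a1 then 1 else 0) - 1) := by
  haveI := Fact.mk hd
  intro a1 a2 m1 m2
  have hdC : (d : ℂ) ≠ 0 := Nat.cast_ne_zero.mpr (NeZero.ne d)
  have hknz : ∀ k ∈ Finset.Icc 1 (d - 1), (k : ZMod d) ≠ 0 := by
    intro k hk
    rw [Finset.mem_Icc] at hk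
    rw [Ne, ZMod.natCast_eq_zero_iff]
    have hd2 := hd.two_le
    intro hdvd
    have := Nat.le_of_dvd (by omega) hdvd
    omega
  rw [Ccoef]
  rw [Finset.sum_congr rfl fun k hk => inner_key d hd ρ c hval a1 a2 m1 m2 k (hknz k hk)]
  by_cases h : a1 + a2 = 0
  · have ha : a1 = -a2 := by rw [add_eq_zero_iff_eq_neg] at h; exact h
    rw [if_pos ha]
    simp only [if_pos h]
    have hsum : ∀ r : ZMod d,
        ∑ k ∈ Finset.Icc 1 (d - 1), eE d ((k : ZMod d) * (a1 * r - (m1 + m2)))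
          = (d : ℂ) * (if m1 + m2 = r * a1 then 1 else 0) - 1 := by
      intro r
      rw [sum_k_eE]
      rw [mul_ite, mul_one, mul_zero]
      congr 1
      refine if_congr ?_ rfl rfl
      rw [sub_eq_zero]
      constructor
      · intro h'; rw [← h', mul_comm]
      · intro h'; rw [h', mul_comm]
    calc ((d : ℂ) ^ 2)⁻¹ * ∑ k ∈ Finset.Icc 1 (d - 1),
            (d : ℂ) * ∑ r : ZMod d, (c r : ℂ) * eE d ((k : ZMod d) * (a1 * r - (m1 + m2)))
        = ((d : ℂ) ^ 2)⁻¹ * ((d : ℂ) * ∑ r : ZMod d, (c r : ℂ) *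
            ∑ k ∈ Finset.Icc 1 (d - 1), eE d ((k : ZMod d) * (a1 * r - (m1 + m2)))) := by
          rw [← Finset.mul_sum, Finset.sum_comm]
          congr 2
          exact Finset.sum_congr rfl fun r _ => (Finset.mul_sum _ _ _).symm
      _ = (d : ℂ)⁻¹ * 1 * ∑ r : ZMod d,
            (c r : ℂ) * ((d : ℂ) * (if m1 + m2 = r * a1 then 1 else 0) - 1) := by
          rw [Finset.sum_congr rfl fun r _ => by rw [hsum r]]
          field_simp
          refine Finset.sum_congr rfl fun x _ => ?_
          simp only [mul_comm a1 x]
  · have ha : ¬(a1 = -a2) := fun he => h (by rw [he, neg_add_cancel])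
    rw [if_neg ha]
    simp only [if_neg h, Finset.sum_const_zero, mul_zero, zero_mul]
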